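/- arXiv:2506.04790 — 3 statements merged into one kernel-verified Lean document; each statement's English description precedes it below -/
import Mathlib

section
/- Let (X, d) be a metric space, let S be a finite set of points in X, and let ε > 0. Consider the greedy filtering procedure that repeatedly removes the first remaining element k of S, adds it to the output set K, and deletes from S all elements x with d(k, x)² < ε. Then any two distinct elements i, j of the resulting output set K satisfy d(i, j)² ≥ ε. -/
open Classical in
/-- Greedy filtering (LotusFilter): pop the first remaining element, keep it, and
delete all remaining elements whose squared distance to it is `< ε`. -/
noncomputable def greedyFilter {X : Type*} [MetricSpace X] (ε : ℝ) : List X → List X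
  | [] => []
  | k :: rest =>
      k :: greedyFilter ε (rest.filter (fun x => !decide (dist k x ^ 2 < ε)))
  termination_by l => l.length
  decreasing_by
    simp only [List.length_cons]
    first
      | exact Nat.lt_succ_of_le (by rw [List.length_unattach]; exact (List.length_filter_le _ _).trans_eq List.length_attach)
      | (simp only [List.length_unattach, List.length_attach]; exact Nat.lt_succ_of_le (List.length_filter_le _ _))

lemma greedyFilter_subset {X : Type*} [MetricSpace X] (ε : ℝ) :
    ∀ n (S : List X), S.length ≤ n → ∀ i ∈ greedyFilter ε S, i ∈ S := by
  intro n
  induction n with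
  | zero =>
    intro S hS i hi
    rw [List.length_eq_zero_iff.mp (Nat.le_zero.mp hS)] at hi ⊢
    simpa [greedyFilter] using hi
  | succ n ihn =>
    intro S hS i hi
    match S with
    | [] => simpa [greedyFilter] using hi
    | k :: rest =>
      rw [greedyFilter] at hi
      rcases List.mem_cons.mp hi with rfl | hi
      · exact List.mem_cons_self
      · have hlen : (rest.filter (fun x => !decide (dist k x ^ 2 < ε))).length ≤ n := by
          calc _ ≤ rest.length := List.length_filter_le _ _
          _ ≤ n := by simpa using Nat.lt_succ_iff.mp (Nat.lt_of_lt_of_le (by simp) hS)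
        exact List.mem_cons_of_mem _ (List.mem_of_mem_filter (ihn _ hlen i hi))

lemma greedyFilter_sep_aux {X : Type*} [MetricSpace X] (ε : ℝ) :
    ∀ n (S : List X), S.length ≤ n →
      ∀ i ∈ greedyFilter ε S, ∀ j ∈ greedyFilter ε S, i ≠ j → ε ≤ dist i j ^ 2 := by
  intro n
  induction n with
  | zero =>
    intro S hS i hi
    rw [List.length_eq_zero_iff.mp (Nat.le_zero.mp hS)] at hi
    simp [greedyFilter] at hi
  | succ n ihn =>
    intro S hS i hi j hj hij
    match S with
    | [] => simp [greedyFilter] at hi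
    | k :: rest =>
      rw [greedyFilter] at hi hj
      have hlen : (rest.filter (fun x => !decide (dist k x ^ 2 < ε))).length ≤ n := by
        calc _ ≤ rest.length := List.length_filter_le _ _
        _ ≤ n := by simpa using Nat.lt_succ_iff.mp (Nat.lt_of_lt_of_le (by simp) hS)
      have key : ∀ x ∈ greedyFilter ε (rest.filter (fun x => !decide (dist k x ^ 2 < ε))),
          ε ≤ dist k x ^ 2 := by
        intro x hx
        have h1 := greedyFilter_subset ε _ _ hlen x hx
        have h2 := List.of_mem_filter h1
        simpa using h2
      rcases List.mem_cons.mp hi with rfl | hi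
      · rcases List.mem_cons.mp hj with rfl | hj
        · exact absurd rfl hij
        · exact key j hj
      · rcases List.mem_cons.mp hj with rfl | hj
        · rw [dist_comm]; exact key i hi
        · exact ihn _ hlen i hi j hj hij

/-- Any two distinct elements of the output of greedy filtering are at squared
distance at least `ε`. -/
theorem greedyFilter_separated {X : Type*} [MetricSpace X] (ε : ℝ) (hε : 0 < ε)
    (S : List X) :
    ∀ i ∈ greedyFilter ε S, ∀ j ∈ greedyFilter ε S, i ≠ j → ε ≤ dist i j ^ 2 :=
  greedyFilter_sep_aux ε S.length S le_rfl
end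

section
/- Greedy max-min selection (GMM) is a 2-approximation for max-min diversification: given a finite set S in a metric space and target size K ≥ 2, the greedy algorithm that starts from any point and repeatedly adds argmax_{j ∈ S∖K} min_{i ∈ K} d(i, j) produces a set whose minimum pairwise distance is at least half the optimal minimum pairwise distance over all K-element subsets of S. -/
/-- GMM (greedy max-min selection) is a 2-approximation for max-min diversification:
if `g 0, g 1, …` is any greedy sequence in `S` (each `g t` maximizes, over candidates
`j ∈ S`, the minimum distance to the already selected points), then the minimum
pairwise distance of any `K`-element subset `T ⊆ S` is at most twice the minimum
pairwise distance of the greedy selection. -/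
theorem gmm_two_approx {X : Type*} [MetricSpace X] (S : Finset X) (K : ℕ)
    (hK : 2 ≤ K) (hKS : K ≤ S.card) (g : Fin K → X)
    (hmem : ∀ t, g t ∈ S) (hinj : Function.Injective g)
    (hgreedy : ∀ t : Fin K, 0 < (t : ℕ) → ∀ j ∈ S,
      sInf {r : ℝ | ∃ i : Fin K, (i : ℕ) < (t : ℕ) ∧ r = dist (g i) j} ≤
        sInf {r : ℝ | ∃ i : Fin K, (i : ℕ) < (t : ℕ) ∧ r = dist (g i) (g t)}) :
    ∀ T ⊆ S, T.card = K →
      sInf {r : ℝ | ∃ i ∈ T, ∃ j ∈ T, i ≠ j ∧ r = dist i j} ≤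
        2 * sInf {r : ℝ | ∃ a b : Fin K, a ≠ b ∧ r = dist (g a) (g b)} := by
  intro T hTS hTcard
  set γ := sInf {r : ℝ | ∃ a b : Fin K, a ≠ b ∧ r = dist (g a) (g b)} with hγdef
  -- basic finiteness / boundedness facts
  have hfin : ∀ (n : ℕ) (j : X),
      {r : ℝ | ∃ i : Fin K, (i : ℕ) < n ∧ r = dist (g i) j}.Finite := by
    intro n j
    apply Set.Finite.subset (Set.finite_range (fun i : Fin K => dist (g i) j))
    rintro r ⟨i, _, rfl⟩; exact ⟨i, rfl⟩
  have hΓfin : {r : ℝ | ∃ a b : Fin K, a ≠ b ∧ r = dist (g a) (g b)}.Finite := by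
    apply Set.Finite.subset
      (Set.finite_range (fun p : Fin K × Fin K => dist (g p.1) (g p.2)))
    rintro r ⟨a, b, _, rfl⟩; exact ⟨(a, b), rfl⟩
  -- the last greedy index
  have hK1 : K - 1 < K := by omega
  set t0 : Fin K := ⟨K - 1, hK1⟩ with ht0
  have ht0pos : 0 < (t0 : ℕ) := by simp [ht0]; omega
  -- monotonicity: the last greedy gap is the smallest one
  have hmono : ∀ t : Fin K, 0 < (t : ℕ) →
      sInf {r : ℝ | ∃ i : Fin K, (i : ℕ) < (t0 : ℕ) ∧ r = dist (g i) (g t0)} ≤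
        sInf {r : ℝ | ∃ i : Fin K, (i : ℕ) < (t : ℕ) ∧ r = dist (g i) (g t)} := by
    intro t ht
    rcases eq_or_ne t t0 with rfl | hne
    · exact le_refl _
    have htlt : (t : ℕ) < K - 1 := by
      have := t.isLt
      have : (t : ℕ) ≠ K - 1 := fun h => hne (Fin.ext (by simp [ht0, h]))
      omega
    have h1 := hgreedy t ht (g t0) (hmem t0)
    refine le_trans ?_ h1
    apply csInf_le_csInf ((hfin _ _).bddBelow)
    · exact ⟨dist (g ⟨0, by omega⟩) (g t0), ⟨0, by omega⟩, by simpa using ht, rfl⟩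
    · rintro r ⟨i, hi, rfl⟩
      exact ⟨i, by simp [ht0]; omega, rfl⟩
  -- the last greedy gap is at most γ
  have hlast : sInf {r : ℝ | ∃ i : Fin K, (i : ℕ) < (t0 : ℕ) ∧ r = dist (g i) (g t0)} ≤ γ := by
    have hΓne : {r : ℝ | ∃ a b : Fin K, a ≠ b ∧ r = dist (g a) (g b)}.Nonempty := by
      refine ⟨dist (g ⟨0, by omega⟩) (g ⟨1, by omega⟩), ⟨0, by omega⟩, ⟨1, by omega⟩, ?_, rfl⟩
      intro h; simpa using congrArg (Fin.val) h
    obtain ⟨a, b, hab, hγeq⟩ := hΓne.csInf_mem hΓfin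
    -- normalize so that the pair is (s, t) with s < t
    obtain ⟨s, t, hst, hd⟩ : ∃ s t : Fin K, (s : ℕ) < (t : ℕ) ∧
        dist (g a) (g b) = dist (g s) (g t) := by
      rcases lt_or_gt_of_ne (fun h : (a : ℕ) = (b : ℕ) => hab (Fin.ext h)) with h | h
      · exact ⟨a, b, h, rfl⟩
      · exact ⟨b, a, h, dist_comm _ _⟩
    have htpos : 0 < (t : ℕ) := by omega
    refine le_trans (hmono t htpos) ?_
    rw [hγdef, hγeq, hd]
    exact csInf_le ((hfin _ _).bddBelow) ⟨s, hst, rfl⟩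
  -- every point of S is within γ of one of the first K-1 greedy points
  have hcover : ∀ j ∈ S, ∃ i : Fin K, (i : ℕ) < K - 1 ∧ dist (g i) j ≤ γ := by
    intro j hj
    have h1 := hgreedy t0 ht0pos j hj
    have h2 : sInf {r : ℝ | ∃ i : Fin K, (i : ℕ) < (t0 : ℕ) ∧ r = dist (g i) j} ≤ γ :=
      le_trans h1 hlast
    have hne : {r : ℝ | ∃ i : Fin K, (i : ℕ) < (t0 : ℕ) ∧ r = dist (g i) j}.Nonempty :=
      ⟨dist (g ⟨0, by omega⟩) j, ⟨0, by omega⟩, by simpa using ht0pos, rfl⟩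
    obtain ⟨i, hi, heq⟩ := hne.csInf_mem (hfin _ _)
    exact ⟨i, by simpa [ht0] using hi, by rw [← heq]; exact h2⟩
  -- choose for each point of T a nearby greedy center among the first K-1
  have hcover' : ∀ x : X, ∃ i : Fin (K - 1),
      x ∈ T → dist (g (Fin.castLE (by omega) i)) x ≤ γ := by
    intro x
    by_cases hx : x ∈ T
    · obtain ⟨i, hi, hd⟩ := hcover x (hTS hx)
      refine ⟨⟨(i : ℕ), hi⟩, fun _ => ?_⟩
      have : (Fin.castLE (by omega : K - 1 ≤ K) ⟨(i : ℕ), hi⟩) = i := Fin.ext rfl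
      rw [this]; exact hd
    · exact ⟨⟨0, by omega⟩, fun h => absurd h hx⟩
  choose f hf using hcover'
  -- pigeonhole: two distinct points of T share a center
  have hcard : (Finset.univ : Finset (Fin (K - 1))).card < T.card := by
    simp [hTcard]; omega
  obtain ⟨x, hx, y, hy, hxy, hfxy⟩ :=
    Finset.exists_ne_map_eq_of_card_lt_of_maps_to hcard
      (fun x _ => Finset.mem_univ (f x))
  have hdxy : dist x y ≤ 2 * γ := by
    have h1 := hf x hx
    have h2 := hf y hy
    rw [hfxy] at h1
    calc dist x y ≤ dist x (g (Fin.castLE (by omega) (f y)))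
          + dist (g (Fin.castLE (by omega) (f y))) y := dist_triangle _ _ _
      _ ≤ γ + γ := add_le_add (by rw [dist_comm]; exact h1) h2
      _ = 2 * γ := by ring
  refine le_trans (csInf_le ?_ ⟨x, hx, y, hy, hxy, rfl⟩) hdxy
  exact ⟨0, by rintro r ⟨i, _, j, _, _, rfl⟩; exact dist_nonneg⟩
end

section
/- With the safeguard mode active, the greedy filtering procedure returns exactly min(K, S) elements, where S is the size of the initial candidate set: if pruning empties the candidate set before K elements are selected, the safeguard appends previously pruned candidates so that the final output has cardinality min(K, S). -/
open Classical in
/-- Greedy filtering capped at `K` outputs. -/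
noncomputable def greedyFilterK {X : Type*} [MetricSpace X] (ε : ℝ) :
    ℕ → List X → List X
  | 0, _ => []
  | _, [] => []
  | K + 1, k :: rest =>
      k :: greedyFilterK ε K (rest.filter (fun x => !decide (dist k x ^ 2 < ε)))
  termination_by _ l => l.length
  decreasing_by
    simp only [List.length_cons]
    first
      | exact Nat.lt_succ_of_le (List.length_unattach.trans_le ((List.length_filter_le _ _).trans_eq List.length_attach))
      | (simp only [List.length_unattach, List.length_attach]; exact Nat.lt_succ_of_le (List.length_filter_le _ _))

open Classical in
/-- Greedy filtering with the safeguard: if the filter output falls short of `K`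
elements, the output is topped up with remaining (previously pruned) candidates from
the original candidate list. -/
noncomputable def greedyFilterSafe {X : Type*} [MetricSpace X] (ε : ℝ) (K : ℕ)
    (S : List X) : List X :=
  let out := greedyFilterK ε K S
  out ++ (S.filter (fun a => !decide (a ∈ out))).take (K - out.length)

theorem gfK_zero {X : Type*} [MetricSpace X] (ε : ℝ) (S : List X) :
    greedyFilterK ε 0 S = [] := by rw [greedyFilterK]

theorem gfK_nil {X : Type*} [MetricSpace X] (ε : ℝ) (K : ℕ) :
    greedyFilterK ε (K+1) ([] : List X) = [] := by rw [greedyFilterK]; omega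

theorem gfK_cons {X : Type*} [MetricSpace X] (ε : ℝ) (K : ℕ) (k : X) (rest : List X) :
    greedyFilterK ε (K+1) (k :: rest) =
      k :: greedyFilterK ε K (rest.filter (fun x => !decide (dist k x ^ 2 < ε))) := by
  rw [greedyFilterK]

theorem gfK_props {X : Type*} [MetricSpace X] (ε : ℝ) (hε : 0 < ε) :
    ∀ (n K : ℕ) (S : List X), S.length ≤ n →
      (greedyFilterK ε K S).length ≤ K ∧ (greedyFilterK ε K S).length ≤ S.length ∧
      (∀ x ∈ greedyFilterK ε K S, x ∈ S) ∧ (greedyFilterK ε K S).Nodup := by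
  intro n
  induction n with
  | zero =>
      intro K S hS
      rw [List.length_eq_zero_iff.mp (Nat.le_zero.mp hS)]
      cases K with
      | zero => simp [gfK_zero]
      | succ K => simp [gfK_nil]
  | succ n ih =>
      intro K S hS
      cases K with
      | zero => simp [gfK_zero]
      | succ K =>
          cases S with
          | nil => simp [gfK_nil]
          | cons k rest =>
              have hlen : (rest.filter (fun x => !decide (dist k x ^ 2 < ε))).length ≤ n := by
                have := List.length_filter_le (fun x => !decide (dist k x ^ 2 < ε)) rest
                simp only [List.length_cons] at hS
                omega
              obtain ⟨h1, h2, h3, h4⟩ := ih K _ hlen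
              rw [gfK_cons]
              refine ⟨by simpa using Nat.succ_le_succ h1, ?_, ?_, ?_⟩
              · simp only [List.length_cons]
                exact Nat.succ_le_succ (h2.trans (List.length_filter_le _ _))
              · intro x hx
                rcases List.mem_cons.mp hx with h | h
                · simp [h]
                · exact List.mem_cons_of_mem _ (List.mem_of_mem_filter (h3 x h))
              · refine List.nodup_cons.mpr ⟨fun hk => ?_, h4⟩
                have := List.of_mem_filter (h3 k hk)
                simp [dist_self, hε] at this

open Classical in
theorem filter_not_mem_length {X : Type*} (S o : List X) (hS : S.Nodup) (ho : o.Nodup)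
    (hsub : ∀ x ∈ o, x ∈ S) :
    (S.filter (fun a => !decide (a ∈ o))).length = S.length - o.length := by
  have hsplit := S.length_eq_length_filter_add (fun a => decide (a ∈ o))
  have hmem : (S.filter (fun a => decide (a ∈ o))).length = o.length := by
    have hnod : (S.filter (fun a => decide (a ∈ o))).Nodup := hS.filter _
    rw [← List.toFinset_card_of_nodup hnod, ← List.toFinset_card_of_nodup ho]
    congr 1
    ext a
    simp only [List.mem_toFinset, List.mem_filter, decide_eq_true_eq]
    exact ⟨fun h => h.2, fun h => ⟨hsub a h, h⟩⟩
  omega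

/-- With the safeguard active, the procedure returns exactly `min (K, |S|)`
elements. -/
theorem greedyFilterSafe_length {X : Type*} [MetricSpace X] (ε : ℝ) (hε : 0 < ε)
    (K : ℕ) (S : List X) (hS : S.Nodup) :
    (greedyFilterSafe ε K S).length = min K S.length := by
  obtain ⟨h1, h2, h3, h4⟩ := gfK_props ε hε S.length K S le_rfl
  unfold greedyFilterSafe
  simp only [List.length_append, List.length_take]
  rw [filter_not_mem_length S _ hS h4 h3]
  omega
end
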